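/- Let n be an odd positive integer and N₀ ~ Binomial(n, 1/2). Define θ₁ = N₀/n − 1/2 if N₀ ≤ n/2 and θ₁ = 1 − n/(2N₀) otherwise. Then E[θ₁] = 2^{−n} ∑_{i=0}^{⌊n/2⌋} C(n,i) · i(n − 2i) / (2n(n − i)). -/

import Mathlib

open MeasureTheory

/-- The empirical minimizer of the non-smooth counterexample, as a function of the count
N₀ of zero-valued samples among n observations. -/
noncomputable def exampleMinimizer (n : ℕ) (k : Fin (n + 1)) : ℝ :=
  if 2 * (k : ℕ) ≤ n then (k : ℝ) / n - 1 / 2 else 1 - n / (2 * (k : ℝ))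

/-- for odd n and N₀ ~ Binomial(n, 1/2),
E[θ₁] = 2^{−n} ∑_{i=0}^{⌊n/2⌋} C(n,i)·i(n − 2i)/(2n(n − i)). -/
theorem example_minimizer_bias (n : ℕ) (hn : 0 < n) (hodd : Odd n) :
    ∫ k, exampleMinimizer n k
        ∂((PMF.binomial (1 / 2) (by norm_num) n).toMeasure) =
      ((2 : ℝ) ^ n)⁻¹ * ∑ i ∈ Finset.range (n / 2 + 1),
        (n.choose i : ℝ) * ((i : ℝ) * ((n : ℝ) - 2 * i)) /
          (2 * n * ((n : ℝ) - i)) := by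
  obtain ⟨m, hm⟩ := hodd
  set g : ℕ → ℝ := fun j => ((2:ℝ)^n)⁻¹ * n.choose j *
    (if 2 * j ≤ n then (j : ℝ) / n - 1 / 2 else 1 - n / (2 * (j : ℝ))) with hg
  rw [PMF.integral_eq_sum]
  have hw : ∀ k : Fin (n + 1),
      ((PMF.binomial (1 / 2) (by norm_num) n) k).toReal • exampleMinimizer n k
        = g (k : ℕ) := by
    intro k
    have h2 : (1 - 1/2 : ENNReal) = 1/2 := by
      rw [ENNReal.sub_eq_of_eq_add (by norm_num)]
      norm_num
      exact ENNReal.inv_two_add_inv_two.symm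
    simp only [PMF.binomial_apply, Fin.val_last, h2, ← pow_add,
      Nat.add_sub_cancel' (Nat.lt_succ_iff.1 k.2)]
    have hp : (((1/2 : NNReal)) : ENNReal) = 1/2 := by simp
    rw [hp, h2, ← pow_add, Nat.add_sub_cancel' (Nat.lt_succ_iff.1 k.2)]
    rw [ENNReal.toReal_mul, ENNReal.toReal_pow, ENNReal.toReal_natCast]
    have : ((1/2 : ENNReal)).toReal = 1/2 := by simp
    rw [this, smul_eq_mul, hg, exampleMinimizer]
    simp only [one_div, inv_pow]
  simp_rw [hw]
  rw [Fin.sum_univ_eq_sum_range g (n + 1)]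
  -- split the sum
  have hn2 : n / 2 = m := by omega
  have hsplit : ∑ j ∈ Finset.range (n + 1), g j
      = ∑ i ∈ Finset.range (m + 1), g i + ∑ j ∈ Finset.Ico (m + 1) (n + 1), g j :=
    (Finset.sum_range_add_sum_Ico g (by omega)).symm
  have hrefl : ∑ j ∈ Finset.Ico (m + 1) (n + 1), g j
      = ∑ i ∈ Finset.range (m + 1), g (n - i) := by
    refine Finset.sum_nbij' (fun j => n - j) (fun i => n - i) ?_ ?_ ?_ ?_ ?_
    · intro j hj; simp only [Finset.mem_Ico] at hj; simp only [Finset.mem_range]; omega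
    · intro i hi; simp only [Finset.mem_range] at hi; simp only [Finset.mem_Ico]; omega
    · intro j hj; simp only [Finset.mem_Ico] at hj
      show n - (n - j) = j; omega
    · intro i hi; simp only [Finset.mem_range] at hi
      show n - (n - i) = i; omega
    · intro j hj; simp only [Finset.mem_Ico] at hj
      show g j = g (n - (n - j))
      congr 1; omega
  rw [hsplit, hrefl, ← Finset.sum_add_distrib, hn2, Finset.mul_sum]
  refine Finset.sum_congr rfl fun i hi => ?_
  simp only [Finset.mem_range] at hi
  have hile : i ≤ m := by omega
  have h1 : 2 * i ≤ n := by omega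
  have h2 : ¬ 2 * (n - i) ≤ n := by omega
  have hcs : n.choose (n - i) = n.choose i := Nat.choose_symm (by omega)
  rw [hg]
  simp only [if_pos h1, if_neg h2, hcs]
  have hcast : ((n - i : ℕ) : ℝ) = (n : ℝ) - i := by
    push_cast [Nat.cast_sub (by omega : i ≤ n)]; ring
  rw [hcast]
  have hnpos : (0:ℝ) < n := by positivity
  have hnipos : (0:ℝ) < (n:ℝ) - i := by
    have : (i:ℝ) < n := by exact_mod_cast (by omega : i < n)
    linarith
  have h2n : ((2:ℝ)^n) ≠ 0 := by positivity
  field_simp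
  ring
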